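/- Let m ≥ 1 and T > 0. Let F : ℝᵐ × ℝ → ℝᵐ and G : ℝᵐ × ℝ → ℝ be continuous and T-periodic in their second argument, and let V : ℝᵐ × ℝ → ℝ be continuously differentiable and T-periodic in its second argument. Assume: (i) the set D := { (x,τ) : τ ∈ [0,T], V(x,τ) ≤ 1 } is compact; (ii) V(x,τ) > 0 whenever x ≠ 0, and V(0,τ) = 0 for all τ; (iii) the Lie derivative L(x,τ) := ⟨∇ₓV(x,τ), F(x,τ)⟩ + (∂V/∂τ)(x,τ) · G(x,τ) satisfies L(x,τ) < 0 whenever V(x,τ) ≤ 1 and x ≠ 0, and L(0,τ) = 0 for all τ. Then for every continuously differentiable curve (x̂, τ̂) : [0,∞) → ℝᵐ × ℝ satisfying x̂′(t) = F(x̂(t), τ̂(t)) and τ̂′(t) = G(x̂(t), τ̂(t)) for all t ≥ 0 with V(x̂(0), τ̂(0)) ≤ 1, one has V(x̂(t), τ̂(t)) ≤ 1 for all t ≥ 0, and x̂(t) → 0 as t → ∞. -/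

import Mathlib

open scoped RealInnerProductSpace

private lemma fderiv_shift_eq' {E : Type*} [NormedAddCommGroup E] [NormedSpace ℝ E]
    (f : E → ℝ) (hf : Differentiable ℝ f) (c : E) (hfc : ∀ p, f (p + c) = f p) (p : E) :
    fderiv ℝ f (p + c) = fderiv ℝ f p := by
  have h1 : HasFDerivAt (fun q => f (q + c))
      ((fderiv ℝ f (p + c)).comp (ContinuousLinearMap.id ℝ E)) p :=
    (hf (p + c)).hasFDerivAt.comp p ((hasFDerivAt_id p).add_const c)
  rw [ContinuousLinearMap.comp_id] at h1
  have h2 : (fun q => f (q + c)) = f := funext hfc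
  rw [h2] at h1
  exact h1.fderiv.symm

/-- Theorem 2 of the paper, in transverse coordinates: if `V(x,τ)` is a `C¹`,
`T`-periodic (in `τ`) Lyapunov function for the transverse dynamics
`ẋ_⊥ = F(x_⊥, τ)`, `τ̇ = G(x_⊥, τ)` whose unit sublevel set
`D = {(x,τ) : τ ∈ [0,T], V(x,τ) ≤ 1}` is compact, `V` is positive definite in `x`,
and the Lie derivative `L(x,τ) = DV(x,τ)[F(x,τ), G(x,τ)]` is negative for
`V(x,τ) ≤ 1`, `x ≠ 0`, and vanishes at `x = 0`, then every solution starting with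
`V ≤ 1` stays in `V ≤ 1` and its transversal coordinate tends to `0`. -/
theorem lyapunov_region_of_orbital_stability
    (m : ℕ) (hm : 1 ≤ m) (T : ℝ) (hT : 0 < T)
    (F : EuclideanSpace ℝ (Fin m) × ℝ → EuclideanSpace ℝ (Fin m))
    (G : EuclideanSpace ℝ (Fin m) × ℝ → ℝ)
    (hF : Continuous F) (hG : Continuous G)
    (hFper : ∀ x τ, F (x, τ + T) = F (x, τ))
    (hGper : ∀ x τ, G (x, τ + T) = G (x, τ))
    (V : EuclideanSpace ℝ (Fin m) × ℝ → ℝ)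
    (hV : ContDiff ℝ 1 V)
    (hVper : ∀ x τ, V (x, τ + T) = V (x, τ))
    (hD : IsCompact {p : EuclideanSpace ℝ (Fin m) × ℝ |
      p.2 ∈ Set.Icc (0 : ℝ) T ∧ V p ≤ 1})
    (hVpos : ∀ x τ, x ≠ 0 → 0 < V (x, τ))
    (hV0 : ∀ τ, V (0, τ) = 0)
    (hL : ∀ x τ, V (x, τ) ≤ 1 → x ≠ 0 →
      fderiv ℝ V (x, τ) (F (x, τ), G (x, τ)) < 0)
    (hL0 : ∀ τ, fderiv ℝ V (0, τ) (F (0, τ), G (0, τ)) = 0)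
    (xh : ℝ → EuclideanSpace ℝ (Fin m)) (τh : ℝ → ℝ)
    (hxd : ∀ t, 0 ≤ t → HasDerivAt xh (F (xh t, τh t)) t)
    (hτd : ∀ t, 0 ≤ t → HasDerivAt τh (G (xh t, τh t)) t)
    (h0 : V (xh 0, τh 0) ≤ 1) :
    (∀ t, 0 ≤ t → V (xh t, τh t) ≤ 1) ∧
    Filter.Tendsto xh Filter.atTop (nhds 0) := by
  have hVdiff : Differentiable ℝ V := hV.differentiable one_ne_zero
  set W : ℝ → ℝ := fun t => V (xh t, τh t) with hWdef
  set L : EuclideanSpace ℝ (Fin m) × ℝ → ℝ := fun p => fderiv ℝ V p (F p, G p) with hLdef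
  have hW' : ∀ t, 0 ≤ t → HasDerivAt W (L (xh t, τh t)) t := by
    intro t ht
    exact (hVdiff _).hasFDerivAt.comp_hasDerivAt t ((hxd t ht).prodMk (hτd t ht))
  have hWnn : ∀ t, 0 ≤ W t := by
    intro t
    by_cases h : xh t = 0
    · simp only [hWdef, h, hV0 (τh t), le_refl]
    · exact (hVpos _ _ h).le
  have hW'np : ∀ t, 0 ≤ t → W t ≤ 1 → L (xh t, τh t) ≤ 0 := by
    intro t ht hle
    by_cases h : xh t = 0
    · simp only [hLdef, h]
      exact le_of_eq (hL0 (τh t))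
    · exact (hL _ _ hle h).le
  have hWc : ∀ t, 0 ≤ t → ContinuousAt W t := fun t ht => (hW' t ht).continuousAt
  -- invariance
  have hinv : ∀ t, 0 ≤ t → W t ≤ 1 := by
    intro t0 ht0
    by_contra hgt
    push_neg at hgt
    set S : Set ℝ := Set.Icc 0 t0 ∩ W ⁻¹' Set.Iic 1 with hSdef
    have hWcOn : ContinuousOn W (Set.Icc 0 t0) := fun u hu => (hWc u hu.1).continuousWithinAt
    have hScl : IsClosed S := hWcOn.preimage_isClosed_of_isClosed isClosed_Icc isClosed_Iic
    have hSne : S.Nonempty := ⟨0, ⟨le_refl 0, ht0⟩, h0⟩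
    have hSb : BddAbove S := ⟨t0, fun u hu => hu.1.2⟩
    have hsS : sSup S ∈ S := hScl.csSup_mem hSne hSb
    obtain ⟨⟨hs0, hst0⟩, hsle⟩ := hsS
    have hsle : W (sSup S) ≤ 1 := hsle
    have hslt : sSup S < t0 := lt_of_le_of_ne hst0 (by
      intro hEq; rw [hEq] at hsle; exact absurd hsle (not_le.mpr hgt))
    have key : ∃ u, sSup S < u ∧ u < t0 ∧ W u ≤ 1 := by
      have hIoo : Set.Ioo (sSup S) t0 ∈ nhdsWithin (sSup S) (Set.Ioi (sSup S)) :=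
        Ioo_mem_nhdsGT_of_mem ⟨le_refl _, hslt⟩
      rcases lt_or_eq_of_le hsle with hlt | heq
      · have h1 : ∀ᶠ u in nhds (sSup S), W u < 1 :=
          ((hWc _ hs0).tendsto).eventually_lt_const hlt
        have h2 : ∀ᶠ u in nhdsWithin (sSup S) (Set.Ioi (sSup S)), W u < 1 :=
          h1.filter_mono nhdsWithin_le_nhds
        obtain ⟨u, hu1, hu2⟩ := (h2.and (Filter.eventually_mem_set.mpr hIoo)).exists
        exact ⟨u, hu2.1, hu2.2, hu1.le⟩
      · have hxne : xh (sSup S) ≠ 0 := by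
          intro hx
          rw [hWdef] at heq
          simp only [hx, hV0 (τh (sSup S))] at heq
          norm_num at heq
        have hneg : L (xh (sSup S), τh (sSup S)) < 0 := hL _ _ hsle hxne
        have hslope := (hW' (sSup S) hs0)
        rw [hasDerivAt_iff_tendsto_slope] at hslope
        have h1 : ∀ᶠ u in nhdsWithin (sSup S) {sSup S}ᶜ, slope W (sSup S) u < 0 :=
          hslope.eventually_lt_const hneg
        have h2 : ∀ᶠ u in nhdsWithin (sSup S) (Set.Ioi (sSup S)),
            slope W (sSup S) u < 0 :=
          h1.filter_mono (nhdsWithin_mono _ (fun u hu => ne_of_gt hu))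
        obtain ⟨u, hu1, hu2⟩ := (h2.and (Filter.eventually_mem_set.mpr hIoo)).exists
        refine ⟨u, hu2.1, hu2.2, ?_⟩
        have hus : 0 < u - sSup S := sub_pos.mpr hu2.1
        have : W u - W (sSup S) < 0 := by
          have := mul_neg_of_neg_of_pos hu1 hus
          rwa [slope_def_field, div_mul_cancel₀ _ (ne_of_gt hus)] at this
        rw [← heq]; linarith
    obtain ⟨u, hu1, hu2, hu3⟩ := key
    have : u ≤ sSup S := le_csSup hSb ⟨⟨hs0.trans hu1.le, hu2.le⟩, hu3⟩
    exact absurd this (not_le.mpr hu1)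
  -- antitone
  have hanti : AntitoneOn W (Set.Ici 0) := by
    apply antitoneOn_of_deriv_nonpos (convex_Ici 0)
    · exact fun u hu => (hWc u hu).continuousWithinAt
    · intro u hu
      rw [interior_Ici] at hu
      exact ((hW' u hu.le).differentiableAt).differentiableWithinAt
    · intro u hu
      rw [interior_Ici] at hu
      rw [(hW' u hu.le).deriv]
      exact hW'np u hu.le (hinv u hu.le)
  -- periodicity reductions
  have hVint : ∀ (k : ℤ) x τ, V (x, τ - k * T) = V (x, τ) := by
    intro k x τ
    have hP : Function.Periodic (fun τ => V (x, τ)) T := fun s => hVper x s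
    exact (hP.int_mul k).sub_eq τ
  have hFint : ∀ (k : ℤ) x τ, F (x, τ - k * T) = F (x, τ) := by
    intro k x τ
    have hP : Function.Periodic (fun τ => F (x, τ)) T := fun s => hFper x s
    exact (hP.int_mul k).sub_eq τ
  have hGint : ∀ (k : ℤ) x τ, G (x, τ - k * T) = G (x, τ) := by
    intro k x τ
    have hP : Function.Periodic (fun τ => G (x, τ)) T := fun s => hGper x s
    exact (hP.int_mul k).sub_eq τ
  have hDVint : ∀ (k : ℤ) x τ, fderiv ℝ V (x, τ - k * T) = fderiv ℝ V (x, τ) := by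
    intro k x τ
    have hc : ∀ p : EuclideanSpace ℝ (Fin m) × ℝ,
        V (p + ((0 : EuclideanSpace ℝ (Fin m)), (k : ℝ) * T)) = V p := by
      intro p
      have : p + ((0 : EuclideanSpace ℝ (Fin m)), (k : ℝ) * T) = (p.1, p.2 + k * T) := by
        simp [Prod.ext_iff]
      rw [this]
      have := hVint k p.1 (p.2 + k * T)
      simpa using this.symm
    have := fderiv_shift_eq' V hVdiff ((0 : EuclideanSpace ℝ (Fin m)), (k : ℝ) * T) hc
      (x, τ - k * T)
    have heq : ((x, τ - k * T) + ((0 : EuclideanSpace ℝ (Fin m)), (k : ℝ) * T))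
        = (x, τ) := by
      simp [Prod.ext_iff]
    rw [heq] at this
    exact this.symm
  -- the reduced point
  set r : ℝ → ℝ := fun t => τh t - ⌊τh t / T⌋ * T with hrdef
  have hr0 : ∀ t, 0 ≤ r t := fun t => Int.sub_floor_div_mul_nonneg (τh t) hT
  have hrT : ∀ t, r t < T := fun t => Int.sub_floor_div_mul_lt (τh t) hT
  have hrV : ∀ t, V (xh t, r t) = W t := fun t => hVint _ _ _
  have hrL : ∀ t, L (xh t, r t) = L (xh t, τh t) := by
    intro t
    simp only [hLdef]
    rw [hrdef]
    rw [hDVint ⌊τh t / T⌋ (xh t) (τh t), hFint, hGint]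
  have hrmemD : ∀ t, W t ≤ 1 → ((xh t, r t) : EuclideanSpace ℝ (Fin m) × ℝ) ∈
      {p : EuclideanSpace ℝ (Fin m) × ℝ | p.2 ∈ Set.Icc (0 : ℝ) T ∧ V p ≤ 1} := by
    intro t ht
    exact ⟨⟨hr0 t, (hrT t).le⟩, by rw [hrV t]; exact ht⟩
  -- continuity of L
  have hLcont : Continuous L :=
    (hV.continuous_fderiv one_ne_zero).clm_apply (hF.prodMk hG)
  -- decay: W gets below every positive level
  have hdecay : ∀ η, 0 < η → ∃ t1, 0 ≤ t1 ∧ W t1 < η := by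
    intro η hη
    by_contra hno
    push_neg at hno
    set K : Set (EuclideanSpace ℝ (Fin m) × ℝ) :=
      {p : EuclideanSpace ℝ (Fin m) × ℝ | p.2 ∈ Set.Icc (0 : ℝ) T ∧ V p ≤ 1}
        ∩ V ⁻¹' Set.Ici η with hKdef
    have hKcomp : IsCompact K := hD.inter_right (isClosed_Ici.preimage hV.continuous)
    have hKne : K.Nonempty := by
      refine ⟨(xh 0, r 0), hrmemD 0 h0, ?_⟩
      have := hno 0 (le_refl 0)
      simp only [Set.mem_preimage, Set.mem_Ici]
      rw [hrV 0]; exact this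
    obtain ⟨q, hqK, hqmax⟩ := hKcomp.exists_isMaxOn hKne hLcont.continuousOn
    have hq1 : q.1 ≠ 0 := by
      intro h
      have : V q = 0 := by rw [← Prod.mk.eta (p := q), h]; exact hV0 q.2
      have := hqK.2
      simp only [Set.mem_preimage, Set.mem_Ici] at this
      linarith
    have hLqneg : L q < 0 := by
      have := hL q.1 q.2 hqK.1.2 hq1
      simpa only [hLdef, Prod.mk.eta] using this
    have hbound : ∀ t, 0 ≤ t → L (xh t, τh t) ≤ L q := by
      intro t ht
      rw [← hrL t]
      refine hqmax ⟨hrmemD t (hinv t ht), ?_⟩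
      simp only [Set.mem_preimage, Set.mem_Ici]
      rw [hrV t]; exact hno t ht
    -- g t = W t - L q * t is antitone on Ici 0
    set g : ℝ → ℝ := fun t => W t - L q * t with hgdef
    have hg' : ∀ t, 0 ≤ t → HasDerivAt g (L (xh t, τh t) - L q) t := by
      intro t ht
      have h2 : HasDerivAt (fun u => L q * u) (L q) t := by
        simpa using (hasDerivAt_id t).const_mul (L q)
      exact (hW' t ht).sub h2
    have hganti : AntitoneOn g (Set.Ici 0) := by
      apply antitoneOn_of_deriv_nonpos (convex_Ici 0)
      · exact fun u hu => (hg' u hu).continuousAt.continuousWithinAt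
      · intro u hu
        rw [interior_Ici] at hu
        exact ((hg' u hu.le).differentiableAt).differentiableWithinAt
      · intro u hu
        rw [interior_Ici] at hu
        rw [(hg' u hu.le).deriv]
        have := hbound u hu.le
        linarith
    set t2 : ℝ := (W 0 + 1) / (-(L q)) with ht2def
    have ht2pos : 0 < t2 := div_pos (by linarith [hWnn 0]) (by linarith)
    have hgle : g t2 ≤ g 0 := hganti (Set.mem_Ici.mpr (le_refl 0))
      (Set.mem_Ici.mpr ht2pos.le) ht2pos.le
    have hne : L q ≠ 0 := ne_of_lt hLqneg
    have hcalc : L q * t2 = -(W 0 + 1) := by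
      rw [ht2def, div_neg, mul_neg, neg_inj, ← mul_div_assoc,
        mul_div_cancel_left₀ _ hne]
    simp only [hgdef, mul_zero, sub_zero] at hgle
    rw [hcalc] at hgle
    have := hWnn t2
    linarith
  -- conclusion
  refine ⟨hinv, ?_⟩
  rw [NormedAddCommGroup.tendsto_nhds_zero]
  intro ε hε
  set K' : Set (EuclideanSpace ℝ (Fin m) × ℝ) :=
    {p : EuclideanSpace ℝ (Fin m) × ℝ | p.2 ∈ Set.Icc (0 : ℝ) T ∧ V p ≤ 1}
      ∩ {p | ε ≤ ‖p.1‖} with hK'def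
  have hK'cl : IsClosed {p : EuclideanSpace ℝ (Fin m) × ℝ | ε ≤ ‖p.1‖} :=
    isClosed_le continuous_const (continuous_norm.comp continuous_fst)
  have hK'comp : IsCompact K' := hD.inter_right hK'cl
  rcases K'.eq_empty_or_nonempty with hKe | hKne
  · rw [Filter.eventually_atTop]
    refine ⟨0, fun t ht => ?_⟩
    by_contra hc
    push_neg at hc
    have : (xh t, r t) ∈ K' := ⟨hrmemD t (hinv t ht), hc⟩
    rw [hKe] at this
    exact this
  · obtain ⟨q, hqK, hqmin⟩ := hK'comp.exists_isMinOn hKne hV.continuous.continuousOn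
    have hq1 : q.1 ≠ 0 := by
      intro h
      have := hqK.2
      simp only [Set.mem_setOf_eq, h, norm_zero] at this
      linarith
    have hη : 0 < V q := by
      rw [← Prod.mk.eta (p := q)]
      exact hVpos q.1 q.2 hq1
    obtain ⟨t1, ht1, hWt1⟩ := hdecay (V q) hη
    rw [Filter.eventually_atTop]
    refine ⟨t1, fun t ht => ?_⟩
    have ht0 : 0 ≤ t := ht1.trans ht
    have hWt : W t < V q :=
      lt_of_le_of_lt (hanti (Set.mem_Ici.mpr ht1) (Set.mem_Ici.mpr ht0) ht) hWt1
    by_contra hc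
    push_neg at hc
    have hmem : (xh t, r t) ∈ K' := ⟨hrmemD t (hinv t ht0), hc⟩
    have := hqmin hmem
    simp only [Set.mem_setOf_eq] at this
    rw [hrV t] at this
    exact absurd (this.trans_lt hWt) (lt_irrefl _)
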